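/- Let n = k·(2^d − 1), let ν be a strong Santha-Vazirani distribution with bias δ on {0,1}^n, and let f_d(y₁,…,y_k) = g_d(y₁)∘⋯∘g_d(y_k) where each y_i ∈ {0,1}^{2^d−1} and g_d maps a string to its Hamming-coset index in {0,1}^d. Then H_∞(f_d(Y)) ≥ kd − k·log₂((1+δ)/(1−δ)) for Y ∼ ν; hence the min-entropy rate of the output is at least 1 − (1/d)·log₂((1+δ)/(1−δ)). -/
import Mathlib


open Finset

/-- `μ` is a probability distribution on the finite type `A`. -/
def IsDist {A : Type*} [Fintype A] (μ : A → ℝ) : Prop :=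
  (∀ a, 0 ≤ μ a) ∧ ∑ a, μ a = 1

open Classical in
/-- Probability of an event under a distribution on a finite type. -/
noncomputable def Pr {A : Type*} [Fintype A] (μ : A → ℝ) (p : A → Prop) : ℝ :=
  ∑ a, if p a then μ a else 0

/-- `μ` is a strong Santha-Vazirani distribution with bias `δ`. -/
def IsStrongSV {n : ℕ} (δ : ℝ) (μ : (Fin n → ZMod 2) → ℝ) : Prop :=
  ∀ (i : Fin n) (z : Fin n → ZMod 2),
    0 < Pr μ (fun x => ∀ j, j ≠ i → x j = z j) →
      (1 - δ) / 2 * Pr μ (fun x => ∀ j, j ≠ i → x j = z j)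
          ≤ Pr μ (fun x => x i = 1 ∧ ∀ j, j ≠ i → x j = z j) ∧
        Pr μ (fun x => x i = 1 ∧ ∀ j, j ≠ i → x j = z j)
          ≤ (1 + δ) / 2 * Pr μ (fun x => ∀ j, j ≠ i → x j = z j)

/-- The parity-check matrix of the Hamming code. -/
def hammingMatrix (d : ℕ) (i : Fin d) (j : Fin (2 ^ d - 1)) : ZMod 2 :=
  if Nat.testBit ((j : ℕ) + 1) (i : ℕ) then 1 else 0

/-- Membership in the Hamming code of length `2^d − 1`. -/
def inHam (d : ℕ) (x : Fin (2 ^ d - 1) → ZMod 2) : Prop :=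
  ∀ i : Fin d, ∑ j, hammingMatrix d i j * x j = 0

/-- `e_i` with `e_0 = 0`. -/
def unitVec (d : ℕ) (i : Fin (2 ^ d)) (j : Fin (2 ^ d - 1)) : ZMod 2 :=
  if (j : ℕ) + 1 = (i : ℕ) then 1 else 0

/-- The `i`-th block (of length `2^d − 1`) of a string of `k·(2^d−1)` bits. -/
def block (d k : ℕ) (y : Fin (k * (2 ^ d - 1)) → ZMod 2) (i : Fin k)
    (j : Fin (2 ^ d - 1)) : ZMod 2 :=
  y ⟨(i : ℕ) * (2 ^ d - 1) + (j : ℕ), by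
    have hj := j.isLt
    have hi : (i : ℕ) + 1 ≤ k := i.isLt
    have h1 : (i : ℕ) * (2 ^ d - 1) + (j : ℕ) < ((i : ℕ) + 1) * (2 ^ d - 1) := by
      rw [add_mul, one_mul]; exact Nat.add_lt_add_left hj _
    exact h1.trans_le (Nat.mul_le_mul_right _ hi)⟩

-- auxiliary lemmas
lemma zmod2_all : ∀ a : ZMod 2, a = 0 ∨ a = 1 := by decide

lemma zmod2_add_self : ∀ a : ZMod 2, a + a = 0 := by decide

lemma zmod2_rearrange : ∀ p q r s : ZMod 2, p + q = r + s → p + r = q + s := by decide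

open Classical in
lemma Pr_filter {A : Type*} [Fintype A] (μ : A → ℝ) (p : A → Prop) :
    Pr μ p = ∑ a ∈ univ.filter p, μ a := (Finset.sum_filter p μ).symm

lemma Pr_pair {A : Type*} [Fintype A] (μ : A → ℝ) {p : A → Prop} {a b : A} (hab : a ≠ b)
    (h : ∀ y, p y ↔ y = a ∨ y = b) : Pr μ p = μ a + μ b := by
  classical
  unfold Pr
  have key : ∀ y, (if p y then μ y else 0)
      = (if y = a then μ y else 0) + (if y = b then μ y else 0) := by
    intro y
    by_cases h1 : y = a
    · subst h1
      rw [if_pos ((h y).2 (Or.inl rfl)), if_pos rfl, if_neg hab, add_zero]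
    · by_cases h2 : y = b
      · subst h2
        rw [if_pos ((h y).2 (Or.inr rfl)), if_neg h1, if_pos rfl, zero_add]
      · rw [if_neg, if_neg h1, if_neg h2, add_zero]
        rw [h y]; tauto
  rw [Finset.sum_congr rfl (fun y _ => key y), Finset.sum_add_distrib]
  simp [Finset.sum_ite_eq']

lemma Pr_single {A : Type*} [Fintype A] (μ : A → ℝ) {p : A → Prop} {a : A}
    (h : ∀ y, p y ↔ y = a) : Pr μ p = μ a := by
  classical
  unfold Pr
  have key : ∀ y, (if p y then μ y else 0) = (if y = a then μ y else 0) := by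
    intro y
    by_cases h1 : y = a
    · subst h1; rw [if_pos ((h y).2 rfl), if_pos rfl]
    · rw [if_neg, if_neg h1]
      rw [h y]; exact h1
  rw [Finset.sum_congr rfl (fun y _ => key y)]
  simp [Finset.sum_ite_eq']

lemma flip_le {n : ℕ} {δ : ℝ} (hδ1 : δ < 1) {μ : (Fin n → ZMod 2) → ℝ}
    (hμ : IsDist μ) (hsv : IsStrongSV δ μ) (i : Fin n) (x : Fin n → ZMod 2) :
    (1 - δ) * μ x ≤ (1 + δ) * μ (Function.update x i (x i + 1)) := by
  classical
  set x0 := Function.update x i 0 with hx0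
  set x1 := Function.update x i 1 with hx1
  have hx0i : x0 i = 0 := Function.update_self _ _ _
  have hx1i : x1 i = 1 := Function.update_self _ _ _
  have hne : x0 ≠ x1 := fun h => by
    have := congrFun h i; rw [hx0i, hx1i] at this; exact zero_ne_one this
  have hPset : ∀ y : Fin n → ZMod 2, (∀ j, j ≠ i → y j = x j) ↔ (y = x0 ∨ y = x1) := by
    intro y
    constructor
    · intro h
      have hy : y = Function.update x i (y i) := by
        funext j
        by_cases hj : j = i
        · subst hj; rw [Function.update_self]
        · rw [Function.update_of_ne hj]; exact h j hj
      rcases zmod2_all (y i) with h0 | h0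
      · left; rw [hy, h0]
      · right; rw [hy, h0]
    · rintro (rfl | rfl) j hj <;> simp [hx0, hx1, Function.update_of_ne hj]
  have hP : Pr μ (fun y => ∀ j, j ≠ i → y j = x j) = μ x0 + μ x1 :=
    Pr_pair μ hne hPset
  have hQ : Pr μ (fun y => y i = 1 ∧ ∀ j, j ≠ i → y j = x j) = μ x1 := by
    refine Pr_single μ fun y => ?_
    constructor
    · rintro ⟨h1, h2⟩
      rcases (hPset y).1 h2 with rfl | rfl
      · rw [hx0i] at h1; exact absurd h1 zero_ne_one
      · rfl
    · rintro rfl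
      exact ⟨hx1i, (hPset x1).2 (Or.inr rfl)⟩
  have h0nn := hμ.1 x0
  have h1nn := hμ.1 x1
  have key : (1 - δ) * μ x0 ≤ (1 + δ) * μ x1 ∧ (1 - δ) * μ x1 ≤ (1 + δ) * μ x0 := by
    by_cases hpos : 0 < Pr μ (fun y => ∀ j, j ≠ i → y j = x j)
    · obtain ⟨hlo, hhi⟩ := hsv i x hpos
      rw [hP] at hlo hhi
      rw [hQ] at hlo hhi
      constructor <;> nlinarith
    · rw [hP] at hpos
      have hz0 : μ x0 = 0 := by nlinarith
      have hz1 : μ x1 = 0 := by nlinarith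
      rw [hz0, hz1]; constructor <;> simp
  rcases zmod2_all (x i) with hxi | hxi
  · have hxx0 : x = x0 := by rw [hx0, ← hxi, Function.update_eq_self]
    have hupd : Function.update x i (x i + 1) = x1 := by rw [hxi, zero_add]
    rw [hupd, hxx0]; exact key.1
  · have hxx1 : x = x1 := by rw [hx1, ← hxi, Function.update_eq_self]
    have hupd : Function.update x i (x i + 1) = x0 := by
      rw [hxi, hx0, show ((1:ZMod 2)+1 = 0) from by decide]
    rw [hupd, hxx1]; exact key.2

def indic {n : ℕ} (F : Finset (Fin n)) : Fin n → ZMod 2 := fun j => if j ∈ F then 1 else 0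

lemma flips_le {n : ℕ} {δ : ℝ} (hδ0 : 0 ≤ δ) (hδ1 : δ < 1) {μ : (Fin n → ZMod 2) → ℝ}
    (hμ : IsDist μ) (hsv : IsStrongSV δ μ) (F : Finset (Fin n)) :
    ∀ x, ((1 - δ) / (1 + δ)) ^ F.card * μ x ≤ μ (x + indic F) := by
  have hc : (0:ℝ) < 1 + δ := by linarith
  have hcnn : (0:ℝ) ≤ (1 - δ) / (1 + δ) := div_nonneg (by linarith) hc.le
  induction F using Finset.induction_on with
  | empty =>
    intro x
    have h0 : x + indic (∅ : Finset (Fin n)) = x := by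
      funext j; simp [indic]
    rw [h0, Finset.card_empty, pow_zero, one_mul]
  | @insert a F ha ih =>
    intro x
    have key : x + indic (insert a F) =
        Function.update (x + indic F) a ((x + indic F) a + 1) := by
      funext j
      by_cases hj : j = a
      · subst hj
        rw [Function.update_self]
        simp [indic, ha, Pi.add_apply]
      · rw [Function.update_of_ne hj]
        simp [indic, hj, Pi.add_apply]
    rw [key, Finset.card_insert_of_notMem ha, pow_succ]
    have h1 := flip_le hδ1 hμ hsv a (x + indic F)
    have h2 := ih x
    calc ((1 - δ) / (1 + δ)) ^ F.card * ((1 - δ) / (1 + δ)) * μ x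
        = ((1 - δ) / (1 + δ)) * (((1 - δ) / (1 + δ)) ^ F.card * μ x) := by ring
      _ ≤ ((1 - δ) / (1 + δ)) * μ (x + indic F) := mul_le_mul_of_nonneg_left h2 hcnn
      _ ≤ μ (Function.update (x + indic F) a ((x + indic F) a + 1)) := by
          rw [div_mul_eq_mul_div, div_le_iff₀ hc]; nlinarith

def posIdx (d k : ℕ) (i : Fin k) (t : Fin (2 ^ d - 1)) : Fin (k * (2 ^ d - 1)) :=
  ⟨(i : ℕ) * (2 ^ d - 1) + (t : ℕ), by
    have hj := t.isLt
    have hi : (i : ℕ) + 1 ≤ k := i.isLt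
    have h1 : (i : ℕ) * (2 ^ d - 1) + (t : ℕ) < ((i : ℕ) + 1) * (2 ^ d - 1) := by
      rw [add_mul, one_mul]; exact Nat.add_lt_add_left hj _
    exact h1.trans_le (Nat.mul_le_mul_right _ hi)⟩

lemma mpos {d k : ℕ} (j : Fin (k * (2 ^ d - 1))) : 0 < 2 ^ d - 1 :=
  Nat.pos_of_ne_zero fun h0 => absurd j.isLt (by simp [h0])

def bIdx (d k : ℕ) (j : Fin (k * (2 ^ d - 1))) : Fin k :=
  ⟨(j : ℕ) / (2 ^ d - 1), (Nat.div_lt_iff_lt_mul (mpos j)).2 j.isLt⟩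

def bPos (d k : ℕ) (j : Fin (k * (2 ^ d - 1))) : Fin (2 ^ d - 1) :=
  ⟨(j : ℕ) % (2 ^ d - 1), Nat.mod_lt _ (mpos j)⟩

def shiftVec (d k : ℕ) (e : Fin k → Fin (2 ^ d)) (j : Fin (k * (2 ^ d - 1))) : ZMod 2 :=
  unitVec d (e (bIdx d k j)) (bPos d k j)

lemma bIdx_posIdx (d k : ℕ) (i : Fin k) (t : Fin (2 ^ d - 1)) :
    bIdx d k (posIdx d k i t) = i := by
  have hm : 0 < 2 ^ d - 1 := mpos (posIdx d k i t)
  apply Fin.ext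
  show ((i : ℕ) * (2 ^ d - 1) + (t : ℕ)) / (2 ^ d - 1) = i
  rw [Nat.mul_comm, Nat.mul_add_div hm, Nat.div_eq_of_lt t.isLt, add_zero]

lemma bPos_posIdx (d k : ℕ) (i : Fin k) (t : Fin (2 ^ d - 1)) :
    bPos d k (posIdx d k i t) = t := by
  apply Fin.ext
  show ((i : ℕ) * (2 ^ d - 1) + (t : ℕ)) % (2 ^ d - 1) = t
  rw [Nat.mul_comm, Nat.mul_add_mod, Nat.mod_eq_of_lt t.isLt]

lemma posIdx_bIdx (d k : ℕ) (j : Fin (k * (2 ^ d - 1))) :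
    posIdx d k (bIdx d k j) (bPos d k j) = j := by
  apply Fin.ext
  show ((j : ℕ) / (2 ^ d - 1)) * (2 ^ d - 1) + (j : ℕ) % (2 ^ d - 1) = j
  rw [Nat.mul_comm]
  exact Nat.div_add_mod _ _

lemma block_apply (d k : ℕ) (y : Fin (k * (2 ^ d - 1)) → ZMod 2) (i : Fin k)
    (t : Fin (2 ^ d - 1)) : block d k y i t = y (posIdx d k i t) := rfl

lemma shiftVec_posIdx (d k : ℕ) (e : Fin k → Fin (2 ^ d)) (i : Fin k) (t : Fin (2 ^ d - 1)) :
    shiftVec d k e (posIdx d k i t) = unitVec d (e i) t := by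
  unfold shiftVec
  rw [bIdx_posIdx, bPos_posIdx]

lemma block_shift (d k : ℕ) (y : Fin (k * (2 ^ d - 1)) → ZMod 2) (e : Fin k → Fin (2 ^ d))
    (i : Fin k) : block d k (y + shiftVec d k e) i = block d k y i + unitVec d (e i) := by
  funext t
  show (y + shiftVec d k e) (posIdx d k i t) = y (posIdx d k i t) + unitVec d (e i) t
  rw [Pi.add_apply, shiftVec_posIdx]

lemma syndrome_unitVec (d : ℕ) (a : Fin (2 ^ d)) (i : Fin d) :
    ∑ j, hammingMatrix d i j * unitVec d a j
      = if Nat.testBit (a : ℕ) (i : ℕ) then 1 else 0 := by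
  rcases Nat.eq_zero_or_pos (a : ℕ) with h0 | h0
  · have hz : ∀ j : Fin (2 ^ d - 1), hammingMatrix d i j * unitVec d a j = 0 := by
      intro j
      have : unitVec d a j = 0 := by unfold unitVec; rw [if_neg]; omega
      rw [this, mul_zero]
    rw [Finset.sum_congr rfl (fun j _ => hz j), Finset.sum_const, smul_zero, h0,
      Nat.zero_testBit, if_neg]
    exact Bool.false_ne_true
  · have hb : (a : ℕ) - 1 < 2 ^ d - 1 := by have := a.isLt; omega
    set b : Fin (2 ^ d - 1) := ⟨(a : ℕ) - 1, hb⟩ with hbdef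
    have key : ∀ j : Fin (2 ^ d - 1), hammingMatrix d i j * unitVec d a j
        = if b = j then hammingMatrix d i j else 0 := by
      intro j
      unfold unitVec
      by_cases hj : (j : ℕ) + 1 = (a : ℕ)
      · rw [if_pos hj, mul_one, if_pos]
        apply Fin.ext
        show (a : ℕ) - 1 = (j : ℕ)
        omega
      · rw [if_neg hj, mul_zero, if_neg]
        intro h
        apply hj
        have : (b : ℕ) = (j : ℕ) := congrArg Fin.val h
        simp only [hbdef] at this
        omega
    rw [Finset.sum_congr rfl (fun j _ => key j), Finset.sum_ite_eq,
      if_pos (Finset.mem_univ b)]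
    unfold hammingMatrix
    have hb1 : (b : ℕ) + 1 = (a : ℕ) := by simp only [hbdef]; omega
    rw [hb1]

lemma inHam_add {d : ℕ} {x y : Fin (2 ^ d - 1) → ZMod 2} (hx : inHam d x) (hy : inHam d y) :
    inHam d (x + y) := by
  intro i
  have : ∀ j : Fin (2 ^ d - 1), hammingMatrix d i j * (x + y) j
      = hammingMatrix d i j * x j + hammingMatrix d i j * y j := by
    intro j; rw [Pi.add_apply, mul_add]
  rw [Finset.sum_congr rfl (fun j _ => this j), Finset.sum_add_distrib, hx i, hy i, add_zero]

lemma unit_cancel {d : ℕ} {a b : Fin (2 ^ d)} {h : Fin (2 ^ d - 1) → ZMod 2}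
    (hh : inHam d h) (heq : h = unitVec d a + unitVec d b) : a = b := by
  have hbit : ∀ i : Fin d, Nat.testBit (a : ℕ) (i : ℕ) = Nat.testBit (b : ℕ) (i : ℕ) := by
    intro i
    have hs := hh i
    rw [heq] at hs
    have expand : ∀ j : Fin (2 ^ d - 1),
        hammingMatrix d i j * (unitVec d a + unitVec d b) j
        = hammingMatrix d i j * unitVec d a j + hammingMatrix d i j * unitVec d b j := by
      intro j; rw [Pi.add_apply, mul_add]
    rw [Finset.sum_congr rfl (fun j _ => expand j), Finset.sum_add_distrib,
      syndrome_unitVec, syndrome_unitVec] at hs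
    by_cases h1 : Nat.testBit (a : ℕ) (i : ℕ) <;> by_cases h2 : Nat.testBit (b : ℕ) (i : ℕ) <;>
      simp [h1, h2] at hs ⊢
  apply Fin.ext
  apply Nat.eq_of_testBit_eq
  intro i
  by_cases hi : i < d
  · exact hbit ⟨i, hi⟩
  · have hpow : (2 : ℕ) ^ d ≤ 2 ^ i := Nat.pow_le_pow_right (by norm_num) (le_of_not_gt hi)
    rw [Nat.testBit_lt_two_pow (lt_of_lt_of_le a.isLt hpow),
      Nat.testBit_lt_two_pow (lt_of_lt_of_le b.isLt hpow)]

lemma zmod2_four : ∀ a a' v : ZMod 2, a + a' = (a + v) + (a' + v) := by decide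

/-- The block-wise Hamming condenser `f_d` applied to a strong SV source: for
`Y ∼ ν`, every output value `(u₁,…,u_k)` of `f_d(Y)` has probability at most
`(((1+δ)/(1−δ))·2^{−d})^k`, i.e. `H_∞(f_d(Y)) ≥ kd − k·log₂((1+δ)/(1−δ))`, so the
output min-entropy rate is at least `1 − (1/d)·log₂((1+δ)/(1−δ))`. -/
theorem condenser_min_entropy (d k : ℕ) (hd : 1 ≤ d)
    (δ : ℝ) (hδ0 : 0 ≤ δ) (hδ1 : δ < 1)
    (ν : (Fin (k * (2 ^ d - 1)) → ZMod 2) → ℝ) (hν : IsDist ν)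
    (hsv : IsStrongSV δ ν) :
    ∀ u : Fin k → Fin (2 ^ d),
      Pr ν (fun y => ∀ i : Fin k, ∃ c, inHam d c ∧ block d k y i = c + unitVec d (u i))
        ≤ ((1 + δ) / (1 - δ) * ((2 : ℝ) ^ d)⁻¹) ^ k := by
  intro u
  classical
  have hc1 : (0:ℝ) < 1 - δ := by linarith
  have hc2 : (0:ℝ) < 1 + δ := by linarith
  set c : ℝ := (1 - δ) / (1 + δ) with hcdef
  have hc : 0 < c := div_pos hc1 hc2
  have hcle1 : c ≤ 1 := by rw [hcdef, div_le_one hc2]; linarith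
  set p : (Fin (k * (2 ^ d - 1)) → ZMod 2) → Prop :=
    fun y => ∀ i : Fin k, ∃ c0, inHam d c0 ∧ block d k y i = c0 + unitVec d (u i) with hpdef
  have hmem : ∀ y, p y → ∀ i, inHam d (block d k y i + unitVec d (u i)) := by
    intro y hy i
    obtain ⟨c0, hc0, hb⟩ := hy i
    have hbb : block d k y i + unitVec d (u i) = c0 := by
      rw [hb]; funext t
      show (c0 t + unitVec d (u i) t) + unitVec d (u i) t = c0 t
      rw [add_assoc, zmod2_add_self, add_zero]
    rw [hbb]; exact hc0
  obtain ⟨S, hPrS, hSmem⟩ : ∃ S : Finset (Fin (k * (2 ^ d - 1)) → ZMod 2),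
      Pr ν p = ∑ x ∈ S, ν x ∧ ∀ y, y ∈ S ↔ p y :=
    ⟨_, Pr_filter ν p, fun y => by simp [Finset.mem_filter]⟩
  -- single-shift bound
  have key : ∀ (e : Fin k → Fin (2 ^ d)) (x), c ^ k * ν x ≤ ν (x + shiftVec d k e) := by
    intro e x
    set F : Finset (Fin (k * (2 ^ d - 1))) := univ.filter (fun j => shiftVec d k e j ≠ 0)
      with hF
    have hind : indic F = shiftVec d k e := by
      funext j
      simp only [indic, hF, Finset.mem_filter, Finset.mem_univ, true_and]
      rcases zmod2_all (shiftVec d k e j) with h | h <;> rw [h] <;> simp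
    have hcard : F.card ≤ k := by
      have hinj : Set.InjOn (bIdx d k) (F : Set _) := by
        intro j hj j' hj' hbb
        simp only [hF, Finset.coe_filter, Set.mem_setOf_eq, Finset.mem_univ, true_and]
          at hj hj'
        have h1 : (bPos d k j : ℕ) + 1 = (e (bIdx d k j) : ℕ) := by
          by_contra hcon
          apply hj; unfold shiftVec unitVec; rw [if_neg hcon]
        have h2 : (bPos d k j' : ℕ) + 1 = (e (bIdx d k j') : ℕ) := by
          by_contra hcon
          apply hj'; unfold shiftVec unitVec; rw [if_neg hcon]
        rw [hbb] at h1
        have hpp : bPos d k j = bPos d k j' := Fin.ext (by omega)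
        rw [← posIdx_bIdx d k j, ← posIdx_bIdx d k j', hbb, hpp]
      calc F.card ≤ (univ : Finset (Fin k)).card :=
            Finset.card_le_card_of_injOn (bIdx d k) (fun a _ => Finset.mem_univ _) hinj
        _ = k := by simp
    calc c ^ k * ν x ≤ c ^ F.card * ν x :=
          mul_le_mul_of_nonneg_right (pow_le_pow_of_le_one hc.le hcle1 hcard) (hν.1 x)
      _ ≤ ν (x + indic F) := flips_le hδ0 hδ1 hν hsv F x
      _ = ν (x + shiftVec d k e) := by rw [hind]
  -- injectivity of the joint map
  have hinj2 : ∀ q ∈ (univ : Finset (Fin k → Fin (2 ^ d))) ×ˢ S, ∀ q' ∈ univ ×ˢ S,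
      q.2 + shiftVec d k q.1 = q'.2 + shiftVec d k q'.1 → q = q' := by
    rintro ⟨e, x⟩ hq ⟨e', x'⟩ hq' heq
    simp only [Finset.mem_product, Finset.mem_univ, true_and] at hq hq'
    have hx := (hSmem x).1 hq
    have hx' := (hSmem x').1 hq'
    have he : e = e' := by
      funext i
      have hbl : block d k x i + unitVec d (e i) = block d k x' i + unitVec d (e' i) := by
        rw [← block_shift, ← block_shift]
        exact congrArg (fun y => block d k y i) heq
      have hpt : block d k x i + block d k x' i = unitVec d (e i) + unitVec d (e' i) := by
        funext t
        exact zmod2_rearrange _ _ _ _ (congrFun hbl t)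
      have hham : inHam d (block d k x i + block d k x' i) := by
        have hsum : block d k x i + block d k x' i
            = (block d k x i + unitVec d (u i)) + (block d k x' i + unitVec d (u i)) := by
          funext t
          exact zmod2_four _ _ _
        rw [hsum]; exact inHam_add (hmem x hx i) (hmem x' hx' i)
      exact unit_cancel hham hpt
    subst he
    have hxx : x = x' := add_right_cancel heq
    subst hxx; rfl
  -- main counting bound
  have main : c ^ k * ((2:ℝ) ^ d) ^ k * Pr ν p ≤ 1 := by
    have step1 : ∑ q ∈ univ ×ˢ S, ν (q.2 + shiftVec d k q.1) ≤ 1 := by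
      calc ∑ q ∈ univ ×ˢ S, ν (q.2 + shiftVec d k q.1)
          = ∑ y ∈ (univ ×ˢ S).image (fun q => q.2 + shiftVec d k q.1), ν y :=
            (Finset.sum_image (f := ν)
              (g := fun q : (Fin k → Fin (2 ^ d)) × (Fin (k * (2 ^ d - 1)) → ZMod 2) =>
                q.2 + shiftVec d k q.1) hinj2).symm
        _ ≤ ∑ y, ν y := Finset.sum_le_sum_of_subset_of_nonneg (Finset.subset_univ _)
            (fun y _ _ => hν.1 y)
        _ = 1 := hν.2
    have step4 : ∑ e : Fin k → Fin (2 ^ d), ∑ x ∈ S, c ^ k * ν x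
        = c ^ k * ((2:ℝ) ^ d) ^ k * Pr ν p := by
      rw [Finset.sum_const, ← Finset.mul_sum, ← hPrS, nsmul_eq_mul, Finset.card_univ,
        Fintype.card_fun, Fintype.card_fin, Fintype.card_fin]
      push_cast
      ring
    calc c ^ k * ((2:ℝ) ^ d) ^ k * Pr ν p
        = ∑ e : Fin k → Fin (2 ^ d), ∑ x ∈ S, c ^ k * ν x := step4.symm
      _ ≤ ∑ e : Fin k → Fin (2 ^ d), ∑ x ∈ S, ν (x + shiftVec d k e) :=
          Finset.sum_le_sum (fun e _ => Finset.sum_le_sum (fun x _ => key e x))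
      _ = ∑ q ∈ univ ×ˢ S, ν (q.2 + shiftVec d k q.1) := by
          rw [Finset.sum_product]
      _ ≤ 1 := step1
  have hA : 0 < c ^ k * ((2:ℝ) ^ d) ^ k := by positivity
  have hfin : Pr ν p ≤ (c ^ k * ((2:ℝ) ^ d) ^ k)⁻¹ := by
    rw [← one_div, le_div_iff₀ hA]
    nlinarith [main]
  have heqRHS : (c ^ k * ((2:ℝ) ^ d) ^ k)⁻¹ = ((1 + δ) / (1 - δ) * ((2 : ℝ) ^ d)⁻¹) ^ k := by
    rw [hcdef, ← mul_pow, ← inv_pow, mul_inv, inv_div]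
  exact hfin.trans_eq heqRHS
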